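/- For ω = π/8 and all γ ∈ ℝ, the spectrum of the kagome operator satisfies: (1) σ_{6π−γ,π/8} = σ_{γ,π/8} (reflexion with respect to the axis γ = 3π); (2) e ∈ σ_{−2π−γ,π/8} if and only if −e ∈ σ_{γ,π/8} (reflexion with respect to the point (−π,0)). -/

import Mathlib

/- STATEMENT 13: for `ω = π/8`, `σ_{6π−γ,π/8} = σ_{γ,π/8}` (reflexion w.r.t. the axis
`γ=3π`) and `e ∈ σ_{−2π−γ,π/8} ↔ −e ∈ σ_{γ,π/8}` (reflexion w.r.t. the point `(−π,0)`). -/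

open Complex Matrix

noncomputable section

/-- `ℓ²(ℤ²;ℂ³)`. -/
abbrev KH : Type := lp (fun _ : ℤ × ℤ => EuclideanSpace ℂ (Fin 3)) 2

/-- `Q` is the kagome operator `Q_{γ,ω}`, written entrywise: the three components of
`ℂ³` correspond to the labels `1,3,5` of the kagome lattice, the magnetic translations are
`(τ₁v)_α = v_{α₁−1,α₂}`, `(τ₂v)_α = e^{iγα₁}v_{α₁,α₂−1}`, and `Q_{γ,ω}` has zero diagonal
blocks and off-diagonal blocks `Q₁₂ = e^{i(ω+γ/8)}(τ₁* + e^{−iγ/2}τ₁*τ₂)`,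
`Q₁₃ = e^{−i(ω+γ/8)}(τ₁* + τ₂*)`, `Q₂₁ = e^{−i(ω+γ/8)}(τ₁ + e^{−iγ/2}τ₁τ₂*)`,
`Q₂₃ = e^{i(ω+γ/8)}(e^{−iγ/2}τ₁τ₂* + τ₂*)`, `Q₃₁ = e^{i(ω+γ/8)}(τ₁ + τ₂)`,
`Q₃₂ = e^{−i(ω+γ/8)}(e^{−iγ/2}τ₁*τ₂ + τ₂)`. -/
def IsKagome (γ ω : ℝ) (Q : KH →L[ℂ] KH) : Prop :=
  ∀ v : KH, ∀ a b : ℤ,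
    (Q v) (a, b) 0 =
        Complex.exp (Complex.I * ((ω : ℂ) + (γ : ℂ)/8)) *
          (v (a+1, b) 1 +
            Complex.exp (Complex.I * (-((γ : ℂ)/2) + (γ : ℂ) * ((a : ℂ)+1))) * v (a+1, b-1) 1)
      + Complex.exp (-(Complex.I * ((ω : ℂ) + (γ : ℂ)/8))) *
          (v (a+1, b) 2 + Complex.exp (-(Complex.I * (γ : ℂ) * (a : ℂ))) * v (a, b+1) 2)
    ∧
    (Q v) (a, b) 1 =
        Complex.exp (-(Complex.I * ((ω : ℂ) + (γ : ℂ)/8))) *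
          (v (a-1, b) 0 +
            Complex.exp (Complex.I * (-((γ : ℂ)/2) - (γ : ℂ) * ((a : ℂ)-1))) * v (a-1, b+1) 0)
      + Complex.exp (Complex.I * ((ω : ℂ) + (γ : ℂ)/8)) *
          (Complex.exp (Complex.I * (-((γ : ℂ)/2) - (γ : ℂ) * ((a : ℂ)-1))) * v (a-1, b+1) 2 +
            Complex.exp (-(Complex.I * (γ : ℂ) * (a : ℂ))) * v (a, b+1) 2)
    ∧
    (Q v) (a, b) 2 =
        Complex.exp (Complex.I * ((ω : ℂ) + (γ : ℂ)/8)) *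
          (v (a-1, b) 0 + Complex.exp (Complex.I * (γ : ℂ) * (a : ℂ)) * v (a, b-1) 0)
      + Complex.exp (-(Complex.I * ((ω : ℂ) + (γ : ℂ)/8))) *
          (Complex.exp (Complex.I * (-((γ : ℂ)/2) + (γ : ℂ) * ((a : ℂ)+1))) * v (a+1, b-1) 1 +
            Complex.exp (Complex.I * (γ : ℂ) * (a : ℂ)) * v (a, b-1) 1)

/-! ### auxiliary infrastructure -/

section Aux

lemma stmt13_exp_shift {x y : ℂ} (n : ℤ) (h : x = y + n * (2 * Real.pi * Complex.I)) :
    Complex.exp x = Complex.exp y := by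
  rw [h, Complex.exp_add, Complex.exp_int_mul_two_pi_mul_I, mul_one]

lemma stmt13_exp_shift_neg {x y : ℂ} (n : ℤ)
    (h : x = y + Real.pi * Complex.I + n * (2 * Real.pi * Complex.I)) :
    Complex.exp x = -Complex.exp y := by
  rw [h, Complex.exp_add, Complex.exp_add, Complex.exp_pi_mul_I,
    Complex.exp_int_mul_two_pi_mul_I, mul_one, mul_neg_one]

def sgn (p : ℤ × ℤ) : ℂ := Complex.exp (Real.pi * Complex.I * ((p.1 : ℂ) + (p.2 : ℂ)))

lemma norm_sgn (p : ℤ × ℤ) : ‖sgn p‖ = 1 := by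
  simp [sgn, Complex.norm_exp]

lemma conj_sgn (p : ℤ × ℤ) :
    (starRingEnd ℂ) (sgn p) = Complex.exp (-(Real.pi * Complex.I * ((p.1 : ℂ) + (p.2 : ℂ)))) := by
  rw [sgn, ← Complex.exp_conj]
  congr 1
  simp

lemma sgn_mul_conj (p : ℤ × ℤ) : sgn p * (starRingEnd ℂ) (sgn p) = 1 := by
  rw [conj_sgn, sgn, ← Complex.exp_add, add_neg_cancel, Complex.exp_zero]

def Wp (v : ∀ _ : ℤ × ℤ, EuclideanSpace ℂ (Fin 3)) : ∀ _ : ℤ × ℤ, EuclideanSpace ℂ (Fin 3) :=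
  fun p => WithLp.toLp 2 (fun k => sgn p * (starRingEnd ℂ) (v p k))

lemma norm_Wp (v : ∀ _ : ℤ × ℤ, EuclideanSpace ℂ (Fin 3)) (p : ℤ × ℤ) : ‖Wp v p‖ = ‖v p‖ := by
  rw [EuclideanSpace.norm_eq, EuclideanSpace.norm_eq]
  congr 1
  refine Finset.sum_congr rfl fun k _ => ?_
  simp only [Wp, PiLp.toLp_apply]
  rw [norm_mul, RCLike.norm_conj, show ‖sgn p‖ = 1 from norm_sgn p, one_mul]

lemma memWp (v : KH) : Memℓp (Wp v) 2 := by
  have h := ((memℓp_gen_iff (p := 2) (by norm_num)).1 (lp.memℓp v))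
  refine memℓp_gen ?_
  have : (fun i => ‖Wp v i‖ ^ (2 : ENNReal).toReal) = fun i => ‖v i‖ ^ (2 : ENNReal).toReal := by
    funext i; rw [norm_Wp]
  rw [this]; exact h

def Wm : KH → KH := fun v => ⟨Wp v, memWp v⟩

lemma Wm_apply (v : KH) (p : ℤ × ℤ) (k : Fin 3) :
    (Wm v) p k = sgn p * (starRingEnd ℂ) (v p k) := rfl

lemma Wm_Wm (v : KH) : Wm (Wm v) = v := by
  apply lp.ext; funext p; ext k
  rw [Wm_apply, Wm_apply]
  simp only [_root_.map_mul, Complex.conj_conj]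
  rw [← mul_assoc, sgn_mul_conj, one_mul]

lemma Wm_add (u v : KH) : Wm (u + v) = Wm u + Wm v := by
  apply lp.ext; funext p; ext k
  have h1 : (u + v : KH) p k = u p k + v p k := rfl
  have h2 : (Wm u + Wm v : KH) p k = Wm u p k + Wm v p k := rfl
  rw [h2, Wm_apply, Wm_apply, Wm_apply, h1, map_add, mul_add]

lemma Wm_smul (z : ℂ) (v : KH) : Wm (z • v) = (starRingEnd ℂ) z • Wm v := by
  apply lp.ext; funext p; ext k
  have h1 : (z • v : KH) p k = z * v p k := rfl
  have h2 : ((starRingEnd ℂ) z • Wm v : KH) p k = (starRingEnd ℂ) z * Wm v p k := rfl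
  rw [h2, Wm_apply, Wm_apply, h1, _root_.map_mul]; ring

lemma norm_Wm (v : KH) : ‖Wm v‖ = ‖v‖ := by
  rw [lp.norm_eq_tsum_rpow (by norm_num) (Wm v), lp.norm_eq_tsum_rpow (by norm_num) v]
  congr 2
  funext p
  have : (Wm v) p = Wp v p := rfl
  rw [this, norm_Wp]

def Phi (A : KH →L[ℂ] KH) : KH →L[ℂ] KH :=
  LinearMap.mkContinuous
    { toFun := fun v => Wm (A (Wm v))
      map_add' := fun u v => by show Wm (A (Wm (u + v))) = Wm (A (Wm u)) + Wm (A (Wm v)); rw [Wm_add, map_add, Wm_add]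
      map_smul' := fun z v => by
        simp only [RingHom.id_apply]
        show Wm (A (Wm (z • v))) = z • Wm (A (Wm v))
        rw [Wm_smul, A.map_smul, Wm_smul, Complex.conj_conj] }
    ‖A‖ (fun v => by
      simp only [LinearMap.coe_mk, AddHom.coe_mk]
      rw [norm_Wm, ← norm_Wm v]
      exact A.le_opNorm (Wm v))

lemma Phi_apply (A : KH →L[ℂ] KH) (v : KH) : Phi A v = Wm (A (Wm v)) := rfl

lemma Phi_mul (A B : KH →L[ℂ] KH) : Phi (A * B) = Phi A * Phi B := by
  refine ContinuousLinearMap.ext fun v => ?_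
  simp only [ContinuousLinearMap.mul_apply, Phi_apply, Wm_Wm]

lemma Phi_one : Phi 1 = 1 := by
  refine ContinuousLinearMap.ext fun v => ?_
  show Wm ((1 : KH →L[ℂ] KH) (Wm v)) = v
  rw [ContinuousLinearMap.one_apply, Wm_Wm]

lemma Phi_add (A B : KH →L[ℂ] KH) : Phi (A + B) = Phi A + Phi B := by
  refine ContinuousLinearMap.ext fun v => ?_
  simp only [ContinuousLinearMap.add_apply, Phi_apply, map_add, Wm_add]

lemma Phi_smul (z : ℂ) (A : KH →L[ℂ] KH) : Phi (z • A) = (starRingEnd ℂ) z • Phi A := by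
  refine ContinuousLinearMap.ext fun v => ?_
  simp only [ContinuousLinearMap.smul_apply, Phi_apply, Wm_smul]

lemma Phi_Phi (A : KH →L[ℂ] KH) : Phi (Phi A) = A := by
  refine ContinuousLinearMap.ext fun v => ?_
  simp only [Phi_apply, Wm_Wm]

lemma isUnit_Phi_of {A : KH →L[ℂ] KH} (hA : IsUnit A) : IsUnit (Phi A) := by
  obtain ⟨⟨x, y, hxy, hyx⟩, rfl⟩ := hA
  exact ⟨⟨Phi x, Phi y, by rw [← Phi_mul, hxy, Phi_one], by rw [← Phi_mul, hyx, Phi_one]⟩, rfl⟩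

lemma isUnit_Phi {A : KH →L[ℂ] KH} : IsUnit (Phi A) ↔ IsUnit A :=
  ⟨fun h => Phi_Phi A ▸ isUnit_Phi_of h, isUnit_Phi_of⟩

/-! ### uniqueness -/

lemma kagome_unique {γ ω : ℝ} {A B : KH →L[ℂ] KH}
    (hA : IsKagome γ ω A) (hB : IsKagome γ ω B) : A = B := by
  refine ContinuousLinearMap.ext fun v => ?_
  apply lp.ext
  funext p
  obtain ⟨a, b⟩ := p
  ext k
  fin_cases k
  · exact (hA v a b).1.trans (hB v a b).1.symm
  · exact (hA v a b).2.1.trans (hB v a b).2.1.symm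
  · exact (hA v a b).2.2.trans (hB v a b).2.2.symm

/-! ### shift by 8π gives minus the operator -/

lemma kagome_shift8 {γ ω : ℝ} {A : KH →L[ℂ] KH} (hA : IsKagome γ ω A) :
    IsKagome (γ + 8 * Real.pi) ω (-A) := by
  intro v a b
  have h := hA v a b
  have e0 : ((γ + 8 * Real.pi : ℝ) : ℂ) = (γ : ℂ) + 8 * (Real.pi : ℂ) := by push_cast; ring
  have E1 : Complex.exp (Complex.I * ((ω : ℂ) + ((γ : ℂ) + 8 * (Real.pi : ℂ))/8))
      = -Complex.exp (Complex.I * ((ω : ℂ) + (γ : ℂ)/8)) :=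
    stmt13_exp_shift_neg 0 (by push_cast; ring)
  have E2 : Complex.exp (-(Complex.I * ((ω : ℂ) + ((γ : ℂ) + 8 * (Real.pi : ℂ))/8)))
      = -Complex.exp (-(Complex.I * ((ω : ℂ) + (γ : ℂ)/8))) :=
    stmt13_exp_shift_neg (-1) (by push_cast; ring)
  have E3 : Complex.exp (Complex.I * (-(((γ : ℂ) + 8 * (Real.pi : ℂ))/2) + ((γ : ℂ) + 8 * (Real.pi : ℂ)) * ((a : ℂ)+1)))
      = Complex.exp (Complex.I * (-((γ : ℂ)/2) + (γ : ℂ) * ((a : ℂ)+1))) :=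
    stmt13_exp_shift (4*a+2) (by push_cast; ring)
  have E4 : Complex.exp (-(Complex.I * ((γ : ℂ) + 8 * (Real.pi : ℂ)) * (a : ℂ)))
      = Complex.exp (-(Complex.I * (γ : ℂ) * (a : ℂ))) :=
    stmt13_exp_shift (-4*a) (by push_cast; ring)
  have E5 : Complex.exp (Complex.I * (-(((γ : ℂ) + 8 * (Real.pi : ℂ))/2) - ((γ : ℂ) + 8 * (Real.pi : ℂ)) * ((a : ℂ)-1)))
      = Complex.exp (Complex.I * (-((γ : ℂ)/2) - (γ : ℂ) * ((a : ℂ)-1))) :=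
    stmt13_exp_shift (2-4*a) (by push_cast; ring)
  have E6 : Complex.exp (Complex.I * ((γ : ℂ) + 8 * (Real.pi : ℂ)) * (a : ℂ))
      = Complex.exp (Complex.I * (γ : ℂ) * (a : ℂ)) :=
    stmt13_exp_shift (4*a) (by push_cast; ring)
  have hneg : ∀ k : Fin 3, ((-A) v) (a, b) k = -((A v) (a, b) k) := fun k => rfl
  refine ⟨?_, ?_, ?_⟩
  · rw [hneg, h.1, e0, E1, E2, E3, E4]; ring
  · rw [hneg, h.2.1, e0, E1, E2, E5, E4]; ring
  · rw [hneg, h.2.2, e0, E1, E2, E3, E6]; ring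


lemma kagome_phi {γ : ℝ} {A : KH →L[ℂ] KH} (hA : IsKagome γ (Real.pi/8) A) :
    IsKagome (-2 * Real.pi - γ) (Real.pi/8) (-(Phi A)) := by
  intro v a b
  have h := hA (Wm v) a b
  have e0 : ((-2 * Real.pi - γ : ℝ) : ℂ) = -2 * (Real.pi : ℂ) - (γ : ℂ) := by push_cast; ring
  have eω : ((Real.pi/8 : ℝ) : ℂ) = (Real.pi : ℂ)/8 := by push_cast; ring
  refine ⟨?_, ?_, ?_⟩
  · have hrepr : ((-(Phi A)) v) (a,b) (0 : Fin 3)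
        = -(sgn (a,b) * (starRingEnd ℂ) ((A (Wm v)) (a,b) 0)) := rfl
    rw [hrepr, h.1, e0, eω]
    simp only [Wm_apply, _root_.map_add, _root_.map_sub, _root_.map_mul, Complex.conj_conj,
      ← Complex.exp_conj, map_div₀, _root_.map_neg, Complex.conj_I, Complex.conj_ofReal,
      map_intCast, map_ofNat, _root_.map_one]
    simp only [conj_sgn]
    simp only [sgn, neg_mul, neg_neg]
    push_cast
    have T1 : Complex.exp ((Real.pi:ℂ) * Complex.I * ((a:ℂ) + (b:ℂ)))
          * Complex.exp (-(Complex.I * ((Real.pi:ℂ)/8 + (γ:ℂ)/8)))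
          * Complex.exp (-((Real.pi:ℂ) * Complex.I * ((a:ℂ) + 1 + (b:ℂ))))
        = -Complex.exp (Complex.I * ((Real.pi:ℂ)/8 + (-(2*(Real.pi:ℂ)) - (γ:ℂ))/8)) := by
      rw [← Complex.exp_add, ← Complex.exp_add]
      exact stmt13_exp_shift_neg (-1) (by push_cast; ring)
    have T2 : Complex.exp ((Real.pi:ℂ) * Complex.I * ((a:ℂ) + (b:ℂ)))
          * Complex.exp (-(Complex.I * ((Real.pi:ℂ)/8 + (γ:ℂ)/8)))
          * Complex.exp (-(Complex.I * (-((γ:ℂ)/2) + (γ:ℂ)*((a:ℂ)+1))))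
          * Complex.exp (-((Real.pi:ℂ) * Complex.I * ((a:ℂ) + 1 + ((b:ℂ) - 1))))
        = -(Complex.exp (Complex.I * ((Real.pi:ℂ)/8 + (-(2*(Real.pi:ℂ)) - (γ:ℂ))/8))
            * Complex.exp (Complex.I * (-((-(2*(Real.pi:ℂ)) - (γ:ℂ))/2) + (-(2*(Real.pi:ℂ)) - (γ:ℂ)) * ((a:ℂ)+1)))) := by
      rw [← Complex.exp_add, ← Complex.exp_add, ← Complex.exp_add, ← Complex.exp_add]
      exact stmt13_exp_shift_neg a (by push_cast; ring)
    have T3 : Complex.exp ((Real.pi:ℂ) * Complex.I * ((a:ℂ) + (b:ℂ)))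
          * Complex.exp (Complex.I * ((Real.pi:ℂ)/8 + (γ:ℂ)/8))
          * Complex.exp (-((Real.pi:ℂ) * Complex.I * ((a:ℂ) + 1 + (b:ℂ))))
        = -Complex.exp (-(Complex.I * ((Real.pi:ℂ)/8 + (-(2*(Real.pi:ℂ)) - (γ:ℂ))/8))) := by
      rw [← Complex.exp_add, ← Complex.exp_add]
      exact stmt13_exp_shift_neg (-1) (by push_cast; ring)
    have T4 : Complex.exp ((Real.pi:ℂ) * Complex.I * ((a:ℂ) + (b:ℂ)))
          * Complex.exp (Complex.I * ((Real.pi:ℂ)/8 + (γ:ℂ)/8))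
          * Complex.exp (Complex.I * (γ:ℂ) * (a:ℂ))
          * Complex.exp (-((Real.pi:ℂ) * Complex.I * ((a:ℂ) + ((b:ℂ) + 1))))
        = -(Complex.exp (-(Complex.I * ((Real.pi:ℂ)/8 + (-(2*(Real.pi:ℂ)) - (γ:ℂ))/8)))
            * Complex.exp (-(Complex.I * (-(2*(Real.pi:ℂ)) - (γ:ℂ)) * (a:ℂ)))) := by
      rw [← Complex.exp_add, ← Complex.exp_add, ← Complex.exp_add, ← Complex.exp_add]
      exact stmt13_exp_shift_neg (-a-1) (by push_cast; ring)
    linear_combination (-(v (a+1,b) 1 : ℂ)) * T1 + (-(v (a+1,b-1) 1 : ℂ)) * T2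
      + (-(v (a+1,b) 2 : ℂ)) * T3 + (-(v (a,b+1) 2 : ℂ)) * T4
  · have hrepr : ((-(Phi A)) v) (a,b) (1 : Fin 3)
        = -(sgn (a,b) * (starRingEnd ℂ) ((A (Wm v)) (a,b) 1)) := rfl
    rw [hrepr, h.2.1, e0, eω]
    simp only [Wm_apply, _root_.map_add, _root_.map_sub, _root_.map_mul, Complex.conj_conj,
      ← Complex.exp_conj, map_div₀, _root_.map_neg, Complex.conj_I, Complex.conj_ofReal,
      map_intCast, map_ofNat, _root_.map_one]
    simp only [conj_sgn]
    simp only [sgn, neg_mul, neg_neg]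
    push_cast
    have U1 : Complex.exp ((Real.pi:ℂ) * Complex.I * ((a:ℂ) + (b:ℂ)))
          * Complex.exp (Complex.I * ((Real.pi:ℂ)/8 + (γ:ℂ)/8))
          * Complex.exp (-((Real.pi:ℂ) * Complex.I * ((a:ℂ) - 1 + (b:ℂ))))
        = -Complex.exp (-(Complex.I * ((Real.pi:ℂ)/8 + (-(2*(Real.pi:ℂ)) - (γ:ℂ))/8))) := by
      rw [← Complex.exp_add, ← Complex.exp_add]
      exact stmt13_exp_shift_neg 0 (by push_cast; ring)
    have U2 : Complex.exp ((Real.pi:ℂ) * Complex.I * ((a:ℂ) + (b:ℂ)))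
          * Complex.exp (Complex.I * ((Real.pi:ℂ)/8 + (γ:ℂ)/8))
          * Complex.exp (-(Complex.I * (-((γ:ℂ)/2) - (γ:ℂ)*((a:ℂ)-1))))
          * Complex.exp (-((Real.pi:ℂ) * Complex.I * ((a:ℂ) - 1 + ((b:ℂ) + 1))))
        = -(Complex.exp (-(Complex.I * ((Real.pi:ℂ)/8 + (-(2*(Real.pi:ℂ)) - (γ:ℂ))/8)))
            * Complex.exp (Complex.I * (-((-(2*(Real.pi:ℂ)) - (γ:ℂ))/2) - (-(2*(Real.pi:ℂ)) - (γ:ℂ)) * ((a:ℂ)-1)))) := by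
      rw [← Complex.exp_add, ← Complex.exp_add, ← Complex.exp_add, ← Complex.exp_add]
      exact stmt13_exp_shift_neg (-a) (by push_cast; ring)
    have U3 : Complex.exp ((Real.pi:ℂ) * Complex.I * ((a:ℂ) + (b:ℂ)))
          * Complex.exp (-(Complex.I * ((Real.pi:ℂ)/8 + (γ:ℂ)/8)))
          * Complex.exp (-(Complex.I * (-((γ:ℂ)/2) - (γ:ℂ)*((a:ℂ)-1))))
          * Complex.exp (-((Real.pi:ℂ) * Complex.I * ((a:ℂ) - 1 + ((b:ℂ) + 1))))
        = -(Complex.exp (Complex.I * ((Real.pi:ℂ)/8 + (-(2*(Real.pi:ℂ)) - (γ:ℂ))/8))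
            * Complex.exp (Complex.I * (-((-(2*(Real.pi:ℂ)) - (γ:ℂ))/2) - (-(2*(Real.pi:ℂ)) - (γ:ℂ)) * ((a:ℂ)-1)))) := by
      rw [← Complex.exp_add, ← Complex.exp_add, ← Complex.exp_add, ← Complex.exp_add]
      exact stmt13_exp_shift_neg (-a) (by push_cast; ring)
    have U4 : Complex.exp ((Real.pi:ℂ) * Complex.I * ((a:ℂ) + (b:ℂ)))
          * Complex.exp (-(Complex.I * ((Real.pi:ℂ)/8 + (γ:ℂ)/8)))
          * Complex.exp (Complex.I * (γ:ℂ) * (a:ℂ))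
          * Complex.exp (-((Real.pi:ℂ) * Complex.I * ((a:ℂ) + ((b:ℂ) + 1))))
        = -(Complex.exp (Complex.I * ((Real.pi:ℂ)/8 + (-(2*(Real.pi:ℂ)) - (γ:ℂ))/8))
            * Complex.exp (-(Complex.I * (-(2*(Real.pi:ℂ)) - (γ:ℂ)) * (a:ℂ)))) := by
      rw [← Complex.exp_add, ← Complex.exp_add, ← Complex.exp_add, ← Complex.exp_add]
      exact stmt13_exp_shift_neg (-a-1) (by push_cast; ring)
    linear_combination (-(v (a-1,b) 0 : ℂ)) * U1 + (-(v (a-1,b+1) 0 : ℂ)) * U2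
      + (-(v (a-1,b+1) 2 : ℂ)) * U3 + (-(v (a,b+1) 2 : ℂ)) * U4
  · have hrepr : ((-(Phi A)) v) (a,b) (2 : Fin 3)
        = -(sgn (a,b) * (starRingEnd ℂ) ((A (Wm v)) (a,b) 2)) := rfl
    rw [hrepr, h.2.2, e0, eω]
    simp only [Wm_apply, _root_.map_add, _root_.map_sub, _root_.map_mul, Complex.conj_conj,
      ← Complex.exp_conj, map_div₀, _root_.map_neg, Complex.conj_I, Complex.conj_ofReal,
      map_intCast, map_ofNat, _root_.map_one]
    simp only [conj_sgn]
    simp only [sgn, neg_mul, neg_neg]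
    push_cast
    have V1 : Complex.exp ((Real.pi:ℂ) * Complex.I * ((a:ℂ) + (b:ℂ)))
          * Complex.exp (-(Complex.I * ((Real.pi:ℂ)/8 + (γ:ℂ)/8)))
          * Complex.exp (-((Real.pi:ℂ) * Complex.I * ((a:ℂ) - 1 + (b:ℂ))))
        = -Complex.exp (Complex.I * ((Real.pi:ℂ)/8 + (-(2*(Real.pi:ℂ)) - (γ:ℂ))/8)) := by
      rw [← Complex.exp_add, ← Complex.exp_add]
      exact stmt13_exp_shift_neg 0 (by push_cast; ring)
    have V2 : Complex.exp ((Real.pi:ℂ) * Complex.I * ((a:ℂ) + (b:ℂ)))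
          * Complex.exp (-(Complex.I * ((Real.pi:ℂ)/8 + (γ:ℂ)/8)))
          * Complex.exp (-(Complex.I * (γ:ℂ) * (a:ℂ)))
          * Complex.exp (-((Real.pi:ℂ) * Complex.I * ((a:ℂ) + ((b:ℂ) - 1))))
        = -(Complex.exp (Complex.I * ((Real.pi:ℂ)/8 + (-(2*(Real.pi:ℂ)) - (γ:ℂ))/8))
            * Complex.exp (Complex.I * (-(2*(Real.pi:ℂ)) - (γ:ℂ)) * (a:ℂ))) := by
      rw [← Complex.exp_add, ← Complex.exp_add, ← Complex.exp_add, ← Complex.exp_add]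
      exact stmt13_exp_shift_neg a (by push_cast; ring)
    have V3 : Complex.exp ((Real.pi:ℂ) * Complex.I * ((a:ℂ) + (b:ℂ)))
          * Complex.exp (Complex.I * ((Real.pi:ℂ)/8 + (γ:ℂ)/8))
          * Complex.exp (-(Complex.I * (-((γ:ℂ)/2) + (γ:ℂ)*((a:ℂ)+1))))
          * Complex.exp (-((Real.pi:ℂ) * Complex.I * ((a:ℂ) + 1 + ((b:ℂ) - 1))))
        = -(Complex.exp (-(Complex.I * ((Real.pi:ℂ)/8 + (-(2*(Real.pi:ℂ)) - (γ:ℂ))/8)))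
            * Complex.exp (Complex.I * (-((-(2*(Real.pi:ℂ)) - (γ:ℂ))/2) + (-(2*(Real.pi:ℂ)) - (γ:ℂ)) * ((a:ℂ)+1)))) := by
      rw [← Complex.exp_add, ← Complex.exp_add, ← Complex.exp_add, ← Complex.exp_add]
      exact stmt13_exp_shift_neg a (by push_cast; ring)
    have V4 : Complex.exp ((Real.pi:ℂ) * Complex.I * ((a:ℂ) + (b:ℂ)))
          * Complex.exp (Complex.I * ((Real.pi:ℂ)/8 + (γ:ℂ)/8))
          * Complex.exp (-(Complex.I * (γ:ℂ) * (a:ℂ)))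
          * Complex.exp (-((Real.pi:ℂ) * Complex.I * ((a:ℂ) + ((b:ℂ) - 1))))
        = -(Complex.exp (-(Complex.I * ((Real.pi:ℂ)/8 + (-(2*(Real.pi:ℂ)) - (γ:ℂ))/8)))
            * Complex.exp (Complex.I * (-(2*(Real.pi:ℂ)) - (γ:ℂ)) * (a:ℂ))) := by
      rw [← Complex.exp_add, ← Complex.exp_add, ← Complex.exp_add, ← Complex.exp_add]
      exact stmt13_exp_shift_neg a (by push_cast; ring)
    linear_combination (-(v (a-1,b) 0 : ℂ)) * V1 + (-(v (a,b-1) 0 : ℂ)) * V2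
      + (-(v (a+1,b-1) 1 : ℂ)) * V3 + (-(v (a,b-1) 1 : ℂ)) * V4

lemma kagome_selfAdjoint {γ ω : ℝ} {A : KH →L[ℂ] KH} (hA : IsKagome γ ω A) :
    ContinuousLinearMap.adjoint A = A := by
  have key : ∀ (x : KH) (α : ℤ × ℤ) (j : Fin 3),
      x α j = (inner ℂ (lp.single 2 α (EuclideanSpace.single j (1:ℂ)) : KH) x : ℂ) := by
    intro x α j
    rw [lp.inner_single_left, EuclideanSpace.inner_single_left, _root_.map_one, one_mul]
  refine ContinuousLinearMap.ext fun v => ?_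
  apply lp.ext
  funext p
  obtain ⟨a, b⟩ := p
  ext k
  fin_cases k
  · set δ : KH := lp.single 2 (a,b) (EuclideanSpace.single (0 : Fin 3) (1:ℂ)) with hδdef
    have hδ : ∀ (x y : ℤ) (k : Fin 3), (δ : KH) (x,y) k = if x = a ∧ y = b ∧ k = 0 then 1 else 0 := by
      intro x y k
      rcases eq_or_ne ((x,y) : ℤ × ℤ) (a,b) with heq | hx
      · rw [Prod.mk.injEq] at heq
        obtain ⟨rfl, rfl⟩ := heq
        rw [hδdef, lp.single_apply_self, EuclideanSpace.single_apply]
        simp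
      · rw [hδdef, lp.single_apply_ne _ _ _ hx]
        have hcond : ¬(x = a ∧ y = b ∧ k = 0) := by
          rintro ⟨rfl, rfl, -⟩; exact hx rfl
        rw [if_neg hcond]
        rfl
    have hvan : ∀ β ∉ ({(a+1,b), (a+1,b-1), (a,b+1)} : Finset (ℤ × ℤ)),
        (inner ℂ ((A δ) β) (v β) : ℂ) = 0 := by
      intro β hβ
      obtain ⟨c, d⟩ := β
      simp only [Finset.mem_insert, Finset.mem_singleton, Prod.mk.injEq, not_or] at hβ
      obtain ⟨h1, h2, h3⟩ := hβ
      have z : (A δ) (c,d) = 0 := by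
        ext k
        fin_cases k
        · show (A δ) (c,d) 0 = (0:ℂ)
          rw [(hA δ c d).1]
          simp [hδ]
        · show (A δ) (c,d) 1 = (0:ℂ)
          have c1 : ¬(c - 1 = a ∧ d = b ∧ (0:Fin 3) = 0) := by
            rintro ⟨hh1, hh2, -⟩; exact h1 ⟨by omega, hh2⟩
          have c2 : ¬(c - 1 = a ∧ d + 1 = b ∧ (0:Fin 3) = 0) := by
            rintro ⟨hh1, hh2, -⟩; exact h2 ⟨by omega, by omega⟩
          rw [(hA δ c d).2.1, hδ, hδ, hδ, hδ, if_neg c1, if_neg c2]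
          simp
        · show (A δ) (c,d) 2 = (0:ℂ)
          have c1 : ¬(c - 1 = a ∧ d = b ∧ (0:Fin 3) = 0) := by
            rintro ⟨hh1, hh2, -⟩; exact h1 ⟨by omega, hh2⟩
          have c3 : ¬(c = a ∧ d - 1 = b ∧ (0:Fin 3) = 0) := by
            rintro ⟨hh1, hh2, -⟩; exact h3 ⟨hh1, by omega⟩
          rw [(hA δ c d).2.2, hδ, hδ, hδ, hδ, if_neg c1, if_neg c3]
          simp
      rw [z, inner_zero_left]
    have hstep := key ((ContinuousLinearMap.adjoint A) v) (a,b) 0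
    rw [ContinuousLinearMap.adjoint_inner_right, lp.inner_eq_tsum, tsum_eq_sum hvan] at hstep
    show ((ContinuousLinearMap.adjoint A) v) (a,b) 0 = (A v) (a,b) 0
    rw [hstep, (hA v a b).1]
    rw [Finset.sum_insert (by simp only [Finset.mem_insert, Finset.mem_singleton, Prod.mk.injEq]; omega),
      Finset.sum_insert (by simp only [Finset.mem_singleton, Prod.mk.injEq]; omega),
      Finset.sum_singleton]
    simp only [PiLp.inner_apply, RCLike.inner_apply, Fin.sum_univ_three]
    rw [(hA δ (a+1) b).1, (hA δ (a+1) b).2.1, (hA δ (a+1) b).2.2,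
      (hA δ (a+1) (b-1)).1, (hA δ (a+1) (b-1)).2.1, (hA δ (a+1) (b-1)).2.2,
      (hA δ a (b+1)).1, (hA δ a (b+1)).2.1, (hA δ a (b+1)).2.2]
    simp only [hδ]
    simp
    simp only [← Complex.exp_conj, _root_.map_add, _root_.map_sub, _root_.map_mul, map_div₀,
      _root_.map_neg, _root_.map_one, map_ofNat, Complex.conj_I, Complex.conj_ofReal, map_intCast,
      neg_mul, neg_neg]
    have T2 : Complex.exp (-(Complex.I * (-((γ:ℂ)/2) - (γ:ℂ)*(a:ℂ))))
        = Complex.exp (Complex.I * (-((γ:ℂ)/2) + (γ:ℂ)*((a:ℂ)+1))) :=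
      stmt13_exp_shift 0 (by push_cast; ring)
    linear_combination (Complex.exp (Complex.I * ((ω:ℂ) + (γ:ℂ)/8)) * (v (a+1,b-1) 1 : ℂ)) * T2
  · set δ : KH := lp.single 2 (a,b) (EuclideanSpace.single (1 : Fin 3) (1:ℂ)) with hδdef
    have hδ : ∀ (x y : ℤ) (k : Fin 3), (δ : KH) (x,y) k = if x = a ∧ y = b ∧ k = 1 then 1 else 0 := by
      intro x y k
      rcases eq_or_ne ((x,y) : ℤ × ℤ) (a,b) with heq | hx
      · rw [Prod.mk.injEq] at heq
        obtain ⟨rfl, rfl⟩ := heq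
        rw [hδdef, lp.single_apply_self, EuclideanSpace.single_apply]
        simp
      · rw [hδdef, lp.single_apply_ne _ _ _ hx]
        have hcond : ¬(x = a ∧ y = b ∧ k = 1) := by
          rintro ⟨rfl, rfl, -⟩; exact hx rfl
        rw [if_neg hcond]
        rfl
    have hvan : ∀ β ∉ ({(a-1,b), (a-1,b+1), (a,b+1)} : Finset (ℤ × ℤ)),
        (inner ℂ ((A δ) β) (v β) : ℂ) = 0 := by
      intro β hβ
      obtain ⟨c, d⟩ := β
      simp only [Finset.mem_insert, Finset.mem_singleton, Prod.mk.injEq, not_or] at hβ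
      obtain ⟨h1, h2, h3⟩ := hβ
      have z : (A δ) (c,d) = 0 := by
        ext k
        fin_cases k
        · show (A δ) (c,d) 0 = (0:ℂ)
          have c1 : ¬(c + 1 = a ∧ d = b ∧ (1:Fin 3) = 1) := by
            rintro ⟨hh1, hh2, -⟩; exact h1 ⟨by omega, hh2⟩
          have c2 : ¬(c + 1 = a ∧ d - 1 = b ∧ (1:Fin 3) = 1) := by
            rintro ⟨hh1, hh2, -⟩; exact h2 ⟨by omega, by omega⟩
          rw [(hA δ c d).1, hδ, hδ, hδ, hδ, if_neg c1, if_neg c2]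
          simp
        · show (A δ) (c,d) 1 = (0:ℂ)
          rw [(hA δ c d).2.1]
          simp [hδ]
        · show (A δ) (c,d) 2 = (0:ℂ)
          have c2 : ¬(c + 1 = a ∧ d - 1 = b ∧ (1:Fin 3) = 1) := by
            rintro ⟨hh1, hh2, -⟩; exact h2 ⟨by omega, by omega⟩
          have c3 : ¬(c = a ∧ d - 1 = b ∧ (1:Fin 3) = 1) := by
            rintro ⟨hh1, hh2, -⟩; exact h3 ⟨hh1, by omega⟩
          rw [(hA δ c d).2.2, hδ, hδ, hδ, hδ, if_neg c2, if_neg c3]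
          simp
      rw [z, inner_zero_left]
    have hstep := key ((ContinuousLinearMap.adjoint A) v) (a,b) 1
    rw [ContinuousLinearMap.adjoint_inner_right, lp.inner_eq_tsum, tsum_eq_sum hvan] at hstep
    show ((ContinuousLinearMap.adjoint A) v) (a,b) 1 = (A v) (a,b) 1
    rw [hstep, (hA v a b).2.1]
    rw [Finset.sum_insert (by simp only [Finset.mem_insert, Finset.mem_singleton, Prod.mk.injEq]; omega),
      Finset.sum_insert (by simp only [Finset.mem_singleton, Prod.mk.injEq]; omega),
      Finset.sum_singleton]
    simp only [PiLp.inner_apply, RCLike.inner_apply, Fin.sum_univ_three]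
    rw [(hA δ (a-1) b).1, (hA δ (a-1) b).2.1, (hA δ (a-1) b).2.2,
      (hA δ (a-1) (b+1)).1, (hA δ (a-1) (b+1)).2.1, (hA δ (a-1) (b+1)).2.2,
      (hA δ a (b+1)).1, (hA δ a (b+1)).2.1, (hA δ a (b+1)).2.2]
    simp only [hδ]
    simp
    simp only [← Complex.exp_conj, _root_.map_add, _root_.map_sub, _root_.map_mul, map_div₀,
      _root_.map_neg, _root_.map_one, map_ofNat, Complex.conj_I, Complex.conj_ofReal, map_intCast,
      neg_mul, neg_neg]
    have T : Complex.exp (-(Complex.I * (-((γ:ℂ)/2) + (γ:ℂ)*(a:ℂ))))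
        = Complex.exp (Complex.I * (-((γ:ℂ)/2) - (γ:ℂ)*((a:ℂ)-1))) :=
      stmt13_exp_shift 0 (by push_cast; ring)
    linear_combination (Complex.exp (-(Complex.I * ((ω:ℂ) + (γ:ℂ)/8))) * (v (a-1,b+1) 0 : ℂ)
      + Complex.exp (Complex.I * ((ω:ℂ) + (γ:ℂ)/8)) * (v (a-1,b+1) 2 : ℂ)) * T
  · set δ : KH := lp.single 2 (a,b) (EuclideanSpace.single (2 : Fin 3) (1:ℂ)) with hδdef
    have hδ : ∀ (x y : ℤ) (k : Fin 3), (δ : KH) (x,y) k = if x = a ∧ y = b ∧ k = 2 then 1 else 0 := by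
      intro x y k
      rcases eq_or_ne ((x,y) : ℤ × ℤ) (a,b) with heq | hx
      · rw [Prod.mk.injEq] at heq
        obtain ⟨rfl, rfl⟩ := heq
        rw [hδdef, lp.single_apply_self, EuclideanSpace.single_apply]
        simp
      · rw [hδdef, lp.single_apply_ne _ _ _ hx]
        have hcond : ¬(x = a ∧ y = b ∧ k = 2) := by
          rintro ⟨rfl, rfl, -⟩; exact hx rfl
        rw [if_neg hcond]
        rfl
    have hvan : ∀ β ∉ ({(a-1,b), (a+1,b-1), (a,b-1)} : Finset (ℤ × ℤ)),
        (inner ℂ ((A δ) β) (v β) : ℂ) = 0 := by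
      intro β hβ
      obtain ⟨c, d⟩ := β
      simp only [Finset.mem_insert, Finset.mem_singleton, Prod.mk.injEq, not_or] at hβ
      obtain ⟨h1, h2, h3⟩ := hβ
      have z : (A δ) (c,d) = 0 := by
        ext k
        fin_cases k
        · show (A δ) (c,d) 0 = (0:ℂ)
          have c1 : ¬(c + 1 = a ∧ d = b ∧ (2:Fin 3) = 2) := by
            rintro ⟨hh1, hh2, -⟩; exact h1 ⟨by omega, hh2⟩
          have c3 : ¬(c = a ∧ d + 1 = b ∧ (2:Fin 3) = 2) := by
            rintro ⟨hh1, hh2, -⟩; exact h3 ⟨hh1, by omega⟩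
          rw [(hA δ c d).1, hδ, hδ, hδ, hδ, if_neg c1, if_neg c3]
          simp
        · show (A δ) (c,d) 1 = (0:ℂ)
          have c2 : ¬(c - 1 = a ∧ d + 1 = b ∧ (2:Fin 3) = 2) := by
            rintro ⟨hh1, hh2, -⟩; exact h2 ⟨by omega, by omega⟩
          have c3 : ¬(c = a ∧ d + 1 = b ∧ (2:Fin 3) = 2) := by
            rintro ⟨hh1, hh2, -⟩; exact h3 ⟨hh1, by omega⟩
          rw [(hA δ c d).2.1, hδ, hδ, hδ, hδ, if_neg c2, if_neg c3]
          simp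
        · show (A δ) (c,d) 2 = (0:ℂ)
          rw [(hA δ c d).2.2]
          simp [hδ]
      rw [z, inner_zero_left]
    have hstep := key ((ContinuousLinearMap.adjoint A) v) (a,b) 2
    rw [ContinuousLinearMap.adjoint_inner_right, lp.inner_eq_tsum, tsum_eq_sum hvan] at hstep
    show ((ContinuousLinearMap.adjoint A) v) (a,b) 2 = (A v) (a,b) 2
    rw [hstep, (hA v a b).2.2]
    rw [Finset.sum_insert (by simp only [Finset.mem_insert, Finset.mem_singleton, Prod.mk.injEq]; omega),
      Finset.sum_insert (by simp only [Finset.mem_singleton, Prod.mk.injEq]; omega),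
      Finset.sum_singleton]
    simp only [PiLp.inner_apply, RCLike.inner_apply, Fin.sum_univ_three]
    rw [(hA δ (a-1) b).1, (hA δ (a-1) b).2.1, (hA δ (a-1) b).2.2,
      (hA δ (a+1) (b-1)).1, (hA δ (a+1) (b-1)).2.1, (hA δ (a+1) (b-1)).2.2,
      (hA δ a (b-1)).1, (hA δ a (b-1)).2.1, (hA δ a (b-1)).2.2]
    simp only [hδ]
    simp
    simp only [← Complex.exp_conj, _root_.map_add, _root_.map_sub, _root_.map_mul, map_div₀,
      _root_.map_neg, _root_.map_one, map_ofNat, Complex.conj_I, Complex.conj_ofReal, map_intCast,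
      neg_mul, neg_neg]
    have T : Complex.exp (-(Complex.I * (-((γ:ℂ)/2) - (γ:ℂ)*(a:ℂ))))
        = Complex.exp (Complex.I * (-((γ:ℂ)/2) + (γ:ℂ)*((a:ℂ)+1))) :=
      stmt13_exp_shift 0 (by push_cast; ring)
    linear_combination (Complex.exp (-(Complex.I * ((ω:ℂ) + (γ:ℂ)/8))) * (v (a+1,b-1) 1 : ℂ)) * T

end Aux

theorem stmt13 (γ : ℝ) (Q Q₂ Q₃ : KH →L[ℂ] KH)
    (h : IsKagome γ (Real.pi / 8) Q)
    (h₂ : IsKagome (6 * Real.pi - γ) (Real.pi / 8) Q₂)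
    (h₃ : IsKagome (-2 * Real.pi - γ) (Real.pi / 8) Q₃) :
    spectrum ℂ Q₂ = spectrum ℂ Q
    ∧ (∀ e : ℂ, e ∈ spectrum ℂ Q₃ ↔ -e ∈ spectrum ℂ Q) := by
  have h3 : Q₃ = -(Phi Q) := kagome_unique h₃ (kagome_phi h)
  have h23 : Q₂ = -Q₃ := by
    have hs := kagome_shift8 h₃
    rw [show (-2 * Real.pi - γ) + 8 * Real.pi = 6 * Real.pi - γ from by ring] at hs
    exact kagome_unique h₂ hs
  have hsa : ContinuousLinearMap.adjoint Q = Q := kagome_selfAdjoint h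
  have hstar : ∀ z : ℂ, star (algebraMap ℂ (KH →L[ℂ] KH) z - Q)
      = algebraMap ℂ (KH →L[ℂ] KH) ((starRingEnd ℂ) z) - Q := by
    intro z
    rw [Algebra.algebraMap_eq_smul_one, Algebra.algebraMap_eq_smul_one, star_sub, star_smul,
      star_one, ContinuousLinearMap.star_eq_adjoint, hsa]
    rfl
  have hconj : ∀ z : ℂ, (starRingEnd ℂ) z ∈ spectrum ℂ Q ↔ z ∈ spectrum ℂ Q := by
    intro z
    rw [spectrum.mem_iff, spectrum.mem_iff, ← hstar, isUnit_star]
  have key3 : ∀ e : ℂ, e ∈ spectrum ℂ Q₃ ↔ -e ∈ spectrum ℂ Q := by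
    intro e
    have hPhi : algebraMap ℂ (KH →L[ℂ] KH) e - Q₃
        = Phi ((starRingEnd ℂ) e • (1 : KH →L[ℂ] KH) + Q) := by
      rw [h3, Phi_add, Phi_smul, Phi_one, Complex.conj_conj,
        Algebra.algebraMap_eq_smul_one, sub_neg_eq_add]
    have hQ : algebraMap ℂ (KH →L[ℂ] KH) (-((starRingEnd ℂ) e)) - Q
        = -(((starRingEnd ℂ) e) • (1 : KH →L[ℂ] KH) + Q) := by
      rw [_root_.map_neg, Algebra.algebraMap_eq_smul_one]; abel
    rw [spectrum.mem_iff, ← hconj (-e), spectrum.mem_iff]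
    apply not_congr
    rw [show (starRingEnd ℂ) (-e) = -((starRingEnd ℂ) e) from _root_.map_neg _ _,
      hQ, hPhi, isUnit_Phi, IsUnit.neg_iff]
  refine ⟨Set.ext fun e => ?_, key3⟩
  have hQ2 : algebraMap ℂ (KH →L[ℂ] KH) e - Q₂
      = -(algebraMap ℂ (KH →L[ℂ] KH) (-e) - Q₃) := by
    rw [h23, _root_.map_neg]; abel
  rw [spectrum.mem_iff, hQ2, IsUnit.neg_iff, ← spectrum.mem_iff, key3 (-e), neg_neg]

end
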